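/- Let A be an n×n real symmetric matrix and λ an eigenvalue of A with multiplicity k. Then there exists a set U ⊆ {1,...,n} with |U| = k such that λ is not an eigenvalue of the principal submatrix of A obtained by deleting the rows and columns indexed by U. -/

import Mathlib

open Matrix

noncomputable def mult {m : Type*} [Fintype m] [DecidableEq m]
    (M : Matrix m m ℝ) (μ : ℝ) : ℕ :=
  Module.finrank ℝ (Module.End.eigenspace (Matrix.toLin' M) μ)

theorem stmt2 {n : ℕ} (A : Matrix (Fin n) (Fin n) ℝ) (hA : A.IsSymm)
    (lam : ℝ) (k : ℕ) (hk : mult A lam = k) (hlam : ∃ v : Fin n → ℝ, v ≠ 0 ∧ A.mulVec v = lam • v) :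
    ∃ U : Finset (Fin n), U.card = k ∧
      ¬ ∃ v : {i : Fin n // i ∉ U} → ℝ, v ≠ 0 ∧
        (A.submatrix (fun p : {i : Fin n // i ∉ U} => p.1)
          (fun p : {i : Fin n // i ∉ U} => p.1)).mulVec v = lam • v := by
  classical
  set B : Matrix (Fin n) (Fin n) ℝ := A - lam • 1 with hBdef
  have hBsymm : B.IsSymm := by
    rw [Matrix.IsSymm, hBdef, Matrix.transpose_sub, Matrix.transpose_smul,
      Matrix.transpose_one, hA]
  have hB : ∀ i j, B i j = B j i := fun i j => (hBsymm.apply j i)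
  -- eigenspace equals kernel of B
  have hker : Module.End.eigenspace (Matrix.toLin' A) lam = LinearMap.ker B.mulVecLin := by
    ext x
    rw [Module.End.mem_eigenspace_iff, LinearMap.mem_ker, Matrix.mulVecLin_apply,
      Matrix.toLin'_apply, hBdef, Matrix.sub_mulVec, Matrix.smul_mulVec,
      Matrix.one_mulVec, sub_eq_zero]
  have hk' : Module.finrank ℝ (LinearMap.ker B.mulVecLin) = k := by
    rw [← hker]; exact hk
  have hkn : k ≤ n := by
    rw [← hk']
    have h1 : Module.finrank ℝ (LinearMap.ker B.mulVecLin) ≤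
        Module.finrank ℝ (Fin n → ℝ) := Submodule.finrank_le _
    rwa [Module.finrank_fin_fun] at h1
  -- rank of B
  have hrank : Module.finrank ℝ (Submodule.span ℝ (Set.range B)) = n - k := by
    have h1 := LinearMap.finrank_range_add_finrank_ker B.mulVecLin
    rw [Matrix.range_mulVecLin,
      (show Set.range B.col = Set.range B by rw [Matrix.col_eq_transpose, hBsymm]; rfl), hk', Module.finrank_fin_fun] at h1
    omega
  -- extract linearly independent spanning rows
  obtain ⟨t, hts, hspan, hti⟩ := exists_linearIndependent ℝ (Set.range B)
  have htfin : t.Finite := hti.setFinite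
  haveI := htfin.fintype
  have htcard : t.toFinset.card = n - k := by
    rw [← finrank_span_set_eq_card hti, hspan, hrank]
  have hg : ∀ x : t, ∃ i, B i = (x : Fin n → ℝ) := fun x => hts x.2
  set g : t → Fin n := fun x => (hg x).choose with hgdef
  have hgB : ∀ x : t, B (g x) = x := fun x => (hg x).choose_spec
  have hginj : Function.Injective g := by
    intro x y hxy
    apply Subtype.ext
    rw [← hgB x, ← hgB y, hxy]
  set S : Finset (Fin n) := Finset.univ.image g with hSdef
  have hScard : S.card = n - k := by
    rw [hSdef, Finset.card_image_of_injective _ hginj, Finset.card_univ,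
      ← Set.toFinset_card, htcard]
  refine ⟨Sᶜ, ?_, ?_⟩
  · rw [Finset.card_compl, hScard, Fintype.card_fin]; omega
  rintro ⟨v, hv, hveq⟩
  have hPS : ∀ p : {i : Fin n // i ∉ Sᶜ}, p.1 ∈ S := fun p => by
    have := p.2; rw [Finset.mem_compl, not_not] at this; exact this
  have hmem : ∀ p : {i : Fin n // i ∉ Sᶜ}, B p.1 ∈ t := by
    intro p
    obtain ⟨x, -, hx⟩ := Finset.mem_image.mp (hPS p)
    rw [← hx, hgB]; exact x.2
  -- linear independence of the rows indexed by the subtype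
  have hBinj : ∀ p q : {i : Fin n // i ∉ Sᶜ}, B p.1 = B q.1 → p = q := by
    intro p q hpq
    obtain ⟨x, -, hx⟩ := Finset.mem_image.mp (hPS p)
    obtain ⟨y, -, hy⟩ := Finset.mem_image.mp (hPS q)
    have hxy : (x : Fin n → ℝ) = y := by rw [← hgB x, ← hgB y, hx, hy, hpq]
    apply Subtype.ext
    rw [← hx, ← hy]
    exact congrArg g (Subtype.ext hxy)
  have hind : LinearIndependent ℝ (fun p : {i : Fin n // i ∉ Sᶜ} => B p.1) := by
    have := hti.comp (fun p : {i : Fin n // i ∉ Sᶜ} => (⟨B p.1, hmem p⟩ : t))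
      (fun p q h => hBinj p q (congrArg Subtype.val h))
    exact this
  -- every row of B is in the span of the rows indexed by the subtype
  have hspan2 : ∀ j, B j ∈
      Submodule.span ℝ (Set.range (fun p : {i : Fin n // i ∉ Sᶜ} => B p.1)) := by
    intro j
    have h1 : B j ∈ Submodule.span ℝ t := by
      rw [hspan]; exact Submodule.subset_span (Set.mem_range_self j)
    have h2 : t ⊆ Set.range (fun p : {i : Fin n // i ∉ Sᶜ} => B p.1) := by
      intro x hx
      have hgx : g ⟨x, hx⟩ ∈ S :=
        Finset.mem_image.mpr ⟨⟨x, hx⟩, Finset.mem_univ _, rfl⟩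
      refine ⟨⟨g ⟨x, hx⟩, by rw [Finset.mem_compl, not_not]; exact hgx⟩, ?_⟩
      exact hgB ⟨x, hx⟩
    exact Submodule.span_mono h2 h1
  -- rewrite the eigen-equation as a kernel equation for B
  have hBv : ∀ i : {i : Fin n // i ∉ Sᶜ},
      ∑ p : {i : Fin n // i ∉ Sᶜ}, B i.1 p.1 * v p = 0 := by
    intro i
    have h1 := congrFun hveq i
    simp only [Matrix.mulVec, dotProduct, Matrix.submatrix_apply, Pi.smul_apply,
      smul_eq_mul] at h1
    have hBEntry : ∀ p : {i : Fin n // i ∉ Sᶜ},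
        B i.1 p.1 = A i.1 p.1 - (if i = p then lam else 0) := by
      intro p
      by_cases h : i = p
      · subst h; simp [hBdef, Matrix.one_apply]
      · have h' : i.1 ≠ p.1 := fun hh => h (Subtype.ext hh)
        simp [hBdef, Matrix.one_apply, h', h]
    have h2 : ∀ p : {i : Fin n // i ∉ Sᶜ},
        B i.1 p.1 * v p = A i.1 p.1 * v p - (if i = p then lam * v p else 0) := by
      intro p; rw [hBEntry p]; by_cases h : i = p <;> simp [h] <;> ring
    rw [Finset.sum_congr rfl (fun p _ => h2 p), Finset.sum_sub_distrib, h1,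
      Finset.sum_ite_eq]
    simp
  -- the key linear combination vanishes
  have hw : ∑ p : {i : Fin n // i ∉ Sᶜ}, v p • B p.1 = 0 := by
    funext j
    obtain ⟨c, hc⟩ := (Submodule.mem_span_range_iff_exists_fun ℝ).mp (hspan2 j)
    have hsum : (∑ p : {i : Fin n // i ∉ Sᶜ}, v p • B p.1) j =
        ∑ p : {i : Fin n // i ∉ Sᶜ}, v p * B p.1 j := by
      simp [Finset.sum_apply]
    rw [hsum]
    have hrow : ∀ p : {i : Fin n // i ∉ Sᶜ},
        B p.1 j = ∑ q : {i : Fin n // i ∉ Sᶜ}, c q * B q.1 p.1 := by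
      intro p
      rw [hB p.1 j, ← hc]
      simp [Finset.sum_apply]
    calc ∑ p : {i : Fin n // i ∉ Sᶜ}, v p * B p.1 j
        = ∑ p : {i : Fin n // i ∉ Sᶜ}, ∑ q : {i : Fin n // i ∉ Sᶜ},
            c q * (B q.1 p.1 * v p) := by
          refine Finset.sum_congr rfl fun p _ => ?_
          rw [hrow p, Finset.mul_sum]
          exact Finset.sum_congr rfl fun q _ => by ring
      _ = ∑ q : {i : Fin n // i ∉ Sᶜ},
            c q * ∑ p : {i : Fin n // i ∉ Sᶜ}, B q.1 p.1 * v p := by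
          rw [Finset.sum_comm]
          exact Finset.sum_congr rfl fun q _ => (Finset.mul_sum _ _ _).symm
      _ = 0 := by simp [hBv]
  exact hv (funext fun p => Fintype.linearIndependent_iff.mp hind v hw p)
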